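/- Let R be a commutative ℚ-algebra, σ a type, and D = (σ →₀ ℕ) the additive monoid of finitely supported functions. Let F : D → R satisfy F(0) = 0, and for each μ ∈ D define Z(μ) = ∑_Λ (∏_{ν ∈ Λ} F(ν)) / |Aut Λ|, where the (finite) sum is over all finite multisets Λ of nonzero elements of D whose sum is μ, and |Aut Λ| = ∏_ν (mult_Λ(ν))!. Then for every nonzero μ ∈ D one has F(μ) = ∑_Λ θ(Λ) · ∏_{ν ∈ Λ} Z(ν), the sum again over all finite multisets Λ of nonzero elements of D with sum μ, where θ(Λ) = (−1)^{ℓ(Λ)−1}·(ℓ(Λ)−1)! / |Aut Λ| and ℓ(Λ) is the cardinality of Λ. -/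

import Mathlib

/-- `|Aut Λ| = ∏_ν (mult_Λ ν)!` for a finite multiset `Λ`, as a rational number. -/
noncomputable def lmovAut {α : Type*} (S : Multiset α) : ℚ :=
  letI := Classical.decEq α
  ∏ a ∈ S.toFinset, (Nat.factorial (S.count a) : ℚ)

/-- `θ(Λ) = (−1)^{ℓ(Λ)−1} (ℓ(Λ)−1)! / |Aut Λ|`. -/
noncomputable def lmovTheta {α : Type*} (S : Multiset α) : ℚ :=
  (-1) ^ (Multiset.card S - 1) * (Nat.factorial (Multiset.card S - 1) : ℚ) / lmovAut S

namespace LMOVAux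

open Multiset Finset

variable {α : Type*}

lemma lmovAut_def [inst : DecidableEq α] (S : Multiset α) :
    lmovAut S = ∏ a ∈ S.toFinset, (Nat.factorial (S.count a) : ℚ) := by
  have : inst = Classical.decEq α := Subsingleton.elim _ _
  rw [lmovAut, this]

lemma lmovAut_pos (S : Multiset α) : 0 < lmovAut S := by
  classical
  rw [lmovAut_def]
  exact Finset.prod_pos fun a _ => by positivity

lemma lmovAut_ne_zero (S : Multiset α) : lmovAut S ≠ 0 := (lmovAut_pos S).ne'

lemma lmovAut_zero : lmovAut (0 : Multiset α) = 1 := by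
  classical simp [lmovAut_def]

lemma lmovAut_singleton (a : α) : lmovAut ({a} : Multiset α) = 1 := by
  classical simp [lmovAut_def]

lemma lmovAut_erase [DecidableEq α] {S : Multiset α} {a : α} (h : a ∈ S) :
    lmovAut (S.erase a) * (S.count a : ℚ) = lmovAut S := by
  rw [lmovAut_def, lmovAut_def]
  have hsub : (S.erase a).toFinset ⊆ S.toFinset := by
    intro x hx
    exact mem_toFinset.2 (Multiset.mem_of_mem_erase (mem_toFinset.1 hx))
  have h1 : ∏ x ∈ (S.erase a).toFinset, (Nat.factorial ((S.erase a).count x) : ℚ)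
      = ∏ x ∈ S.toFinset, (Nat.factorial ((S.erase a).count x) : ℚ) := by
    apply Finset.prod_subset hsub
    intro x _ hx
    have : (S.erase a).count x = 0 := by
      simpa [Multiset.count_eq_zero] using fun hmem => hx (mem_toFinset.2 hmem)
    simp [this]
  have ha : a ∈ S.toFinset := mem_toFinset.2 h
  rw [h1, ← Finset.mul_prod_erase _ _ ha, ← Finset.mul_prod_erase _ _ ha]
  have h2 : ∀ x ∈ S.toFinset.erase a, (Nat.factorial ((S.erase a).count x) : ℚ)
      = (Nat.factorial (S.count x) : ℚ) := by
    intro x hx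
    rw [Multiset.count_erase_of_ne (Finset.ne_of_mem_erase hx)]
  rw [Finset.prod_congr rfl h2, Multiset.count_erase_self]
  have hc : 0 < S.count a := Multiset.count_pos.2 h
  have : (S.count a : ℚ) * (Nat.factorial (S.count a - 1) : ℚ)
      = (Nat.factorial (S.count a) : ℚ) := by
    rw [← Nat.cast_mul, Nat.mul_factorial_pred hc.ne']
  linear_combination (∏ x ∈ S.toFinset.erase a, (Nat.factorial (S.count x) : ℚ)) * this

lemma one_div_lmovAut_erase [DecidableEq α] {S : Multiset α} {a : α} (h : a ∈ S) :
    1 / lmovAut (S.erase a) = (S.count a : ℚ) / lmovAut S := by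
  have hc : (S.count a : ℚ) ≠ 0 := Nat.cast_ne_zero.2 (Multiset.count_pos.2 h).ne'
  have hE := lmovAut_ne_zero (S.erase a)
  rw [← lmovAut_erase h]
  field_simp


section Deg
variable {σ : Type*}

/-- degree of a finitely supported function to ℕ -/
noncomputable def Dg (μ : σ →₀ ℕ) : ℕ := Multiset.card μ.toMultiset

lemma Dg_add (μ ν : σ →₀ ℕ) : Dg (μ + ν) = Dg μ + Dg ν := by
  rw [Dg, Finsupp.toMultiset_add, Multiset.card_add]; rfl

lemma Dg_zero : Dg (0 : σ →₀ ℕ) = 0 := by simp [Dg]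

lemma Dg_eq_zero {μ : σ →₀ ℕ} : Dg μ = 0 ↔ μ = 0 := by
  rw [Dg, Finsupp.card_toMultiset]
  constructor
  · intro h
    ext a
    by_cases ha : a ∈ μ.support
    · exact Finset.sum_eq_zero_iff.1 h a ha
    · simpa using Finsupp.notMem_support_iff.1 ha
  · rintro rfl; simp

lemma Dg_multiset_sum (Λ : Multiset (σ →₀ ℕ)) : Dg Λ.sum = (Λ.map Dg).sum := by
  induction Λ using Multiset.induction with
  | empty => simp [Dg_zero]
  | cons a s ih => simp [Dg_add, ih]

lemma card_le_Dg {Λ : Multiset (σ →₀ ℕ)} (h0 : (0 : σ →₀ ℕ) ∉ Λ) :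
    Multiset.card Λ ≤ Dg Λ.sum := by
  induction Λ using Multiset.induction with
  | empty => simp
  | cons a s ih =>
    have ha : a ≠ 0 := fun h => h0 (h ▸ Multiset.mem_cons_self a s)
    have h1 : 1 ≤ Dg a := Nat.one_le_iff_ne_zero.2 fun h => ha (Dg_eq_zero.1 h)
    have hs := ih fun h => h0 (Multiset.mem_cons_of_mem h)
    simp only [Multiset.card_cons, Multiset.sum_cons, Dg_add]
    omega

lemma finite_S (μ : σ →₀ ℕ) :
    {Λ : Multiset (σ →₀ ℕ) | Λ.sum = μ ∧ (0 : σ →₀ ℕ) ∉ Λ}.Finite := by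
  classical
  set T : Multiset (σ →₀ ℕ) :=
    (Finset.Iic μ).val.bind (fun ν => Multiset.replicate (Dg μ) ν) with hT
  apply Set.Finite.subset (Multiset.toFinset (Multiset.powerset T)).finite_toSet
  rintro Λ ⟨hsum, h0⟩
  simp only [Finset.coe_sort_coe, Finset.mem_coe, Multiset.mem_toFinset,
    Multiset.mem_powerset]
  rw [Multiset.le_iff_count]
  intro x
  by_cases hx : x ∈ Λ
  · have hxle : x ≤ μ := hsum ▸ Multiset.le_sum_of_mem hx
    have h1 : Multiset.count x Λ ≤ Dg μ :=
      le_trans (Multiset.count_le_card x Λ) (hsum ▸ card_le_Dg h0)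
    have h2 : Dg μ ≤ Multiset.count x T := by
      rw [hT, Multiset.count_bind]
      have hmem : Multiset.count x (Multiset.replicate (Dg μ) x) ∈
          ((Finset.Iic μ).val.map fun ν => Multiset.count x (Multiset.replicate (Dg μ) ν)) :=
        Multiset.mem_map_of_mem _ (by simpa using hxle)
      have := Multiset.le_sum_of_mem hmem
      simpa using this
    omega
  · simp [Multiset.count_eq_zero.2 hx]


lemma sum_count_mul_Dg [DecidableEq (σ →₀ ℕ)] (Λ : Multiset (σ →₀ ℕ)) :
    ∑ ν ∈ Λ.toFinset, Λ.count ν * Dg ν = Dg Λ.sum := by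
  rw [Dg_multiset_sum, Finset.sum_multiset_map_count]
  simp [smul_eq_mul]

lemma theta_rel [DecidableEq (σ →₀ ℕ)] {M : Multiset (σ →₀ ℕ)} (hM : M ≠ 0) :
    (Dg M.sum : ℚ) * lmovTheta M
      + ∑ ρ ∈ M.toFinset, (Dg ((M.erase ρ).sum) : ℚ) * lmovTheta (M.erase ρ)
      = if Multiset.card M = 1 then (Dg M.sum : ℚ) else 0 := by
  by_cases h1 : Multiset.card M = 1
  · obtain ⟨a, rfl⟩ := Multiset.card_eq_one.1 h1
    rw [if_pos h1]
    have hθ : lmovTheta {a} = 1 := by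
      simp [lmovTheta, lmovAut_singleton]
    simp [hθ, Multiset.toFinset_singleton, Multiset.erase_singleton, Dg_zero]
  · rw [if_neg h1]
    have hcard : 1 ≤ Multiset.card M := by
      rw [Nat.one_le_iff_ne_zero, ne_eq, Multiset.card_eq_zero]; exact hM
    obtain ⟨k, hk⟩ : ∃ k, Multiset.card M = k + 2 := ⟨Multiset.card M - 2, by omega⟩
    have hAut := lmovAut_ne_zero M
    have hterm : ∀ ρ ∈ M.toFinset, (Dg ((M.erase ρ).sum) : ℚ) * lmovTheta (M.erase ρ)
        = ((-1)^k * (Nat.factorial k : ℚ) / lmovAut M)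
            * (((Dg M.sum : ℚ) - Dg ρ) * (M.count ρ : ℚ)) := by
      intro ρ hρ
      have hρM : ρ ∈ M := Multiset.mem_toFinset.1 hρ
      have hdg : (Dg ((M.erase ρ).sum) : ℚ) = (Dg M.sum : ℚ) - Dg ρ := by
        have h : M.sum = ρ + (M.erase ρ).sum := by
          conv_lhs => rw [← Multiset.cons_erase hρM]
          rw [Multiset.sum_cons]
        rw [h, Dg_add]; push_cast; ring
      have hcardE : Multiset.card (M.erase ρ) - 1 = k := by
        rw [Multiset.card_erase_of_mem hρM, hk, Nat.pred_eq_sub_one]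
        omega
      have hθ : lmovTheta (M.erase ρ)
          = (-1)^k * (Nat.factorial k : ℚ) * ((M.count ρ : ℚ) / lmovAut M) := by
        rw [lmovTheta, hcardE, div_eq_mul_one_div, one_div_lmovAut_erase hρM,
          div_eq_mul_one_div ((M.count ρ : ℚ))]
      rw [hdg, hθ]; ring
    rw [Finset.sum_congr rfl hterm, ← Finset.mul_sum]
    have hc : ∑ ρ ∈ M.toFinset, (M.count ρ : ℚ) = (Multiset.card M : ℚ) := by
      exact_mod_cast congrArg (Nat.cast : ℕ → ℚ) (Multiset.toFinset_sum_count_eq M)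
    have hsum2 : ∑ ρ ∈ M.toFinset, (Dg ρ : ℚ) * (M.count ρ : ℚ) = (Dg M.sum : ℚ) := by
      have hN := sum_count_mul_Dg (σ := σ) M
      calc ∑ ρ ∈ M.toFinset, (Dg ρ : ℚ) * (M.count ρ : ℚ)
          = ((∑ ρ ∈ M.toFinset, M.count ρ * Dg ρ : ℕ) : ℚ) := by
            push_cast
            exact Finset.sum_congr rfl fun x _ => mul_comm _ _
        _ = _ := by rw [hN]
    have hS : ∑ ρ ∈ M.toFinset, ((Dg M.sum : ℚ) - Dg ρ) * (M.count ρ : ℚ)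
        = ((k : ℚ) + 1) * Dg M.sum := by
      have hsplit : ∀ ρ ∈ M.toFinset, ((Dg M.sum : ℚ) - Dg ρ) * (M.count ρ : ℚ)
          = (Dg M.sum : ℚ) * (M.count ρ : ℚ) - (Dg ρ : ℚ) * (M.count ρ : ℚ) :=
        fun ρ _ => sub_mul _ _ _
      rw [Finset.sum_congr rfl hsplit, Finset.sum_sub_distrib, ← Finset.mul_sum, hc,
        hsum2, hk]
      push_cast; ring
    rw [hS]
    have hθM : lmovTheta M = (-1)^(k+1) * (Nat.factorial (k+1) : ℚ) / lmovAut M := by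
      rw [lmovTheta, hk]
      norm_num
    rw [hθM, Nat.factorial_succ]
    push_cast
    field_simp
    ring
end Deg

section Main
variable {R : Type*} [CommRing R] [Algebra ℚ R] {σ : Type*}

noncomputable def TT (μ : σ →₀ ℕ) : Finset (Multiset (σ →₀ ℕ)) := (finite_S μ).toFinset

lemma mem_TT {μ : σ →₀ ℕ} {Λ : Multiset (σ →₀ ℕ)} :
    Λ ∈ TT μ ↔ Λ.sum = μ ∧ (0 : σ →₀ ℕ) ∉ Λ := by
  simp [TT, Set.Finite.mem_toFinset, Set.mem_setOf_eq]

lemma finsum_eq_TT (g : Multiset (σ →₀ ℕ) → R) (μ : σ →₀ ℕ) :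
    ∑ᶠ Λ ∈ {Λ : Multiset (σ →₀ ℕ) | Λ.sum = μ ∧ (0 : σ →₀ ℕ) ∉ Λ}, g Λ
      = ∑ Λ ∈ TT μ, g Λ := by
  rw [← (finite_S μ).coe_toFinset, finsum_mem_coe_finset]
  rfl

lemma TT_zero : TT (0 : σ →₀ ℕ) = {0} := by
  ext Λ
  rw [mem_TT, Finset.mem_singleton]
  constructor
  · rintro ⟨hs, h0⟩
    by_contra hne
    obtain ⟨x, hx⟩ := Multiset.exists_mem_of_ne_zero hne
    exact h0 ((Multiset.sum_eq_zero_iff.1 hs x hx) ▸ hx)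
  · rintro rfl
    simp

lemma TT_self {μ : σ →₀ ℕ} (hμ : μ ≠ 0) : ({μ} : Multiset (σ →₀ ℕ)) ∈ TT μ := by
  rw [mem_TT]
  refine ⟨Multiset.sum_singleton μ, fun h => hμ ?_⟩
  rw [Multiset.mem_singleton] at h
  exact h.symm

lemma nsmul_algebraMap_mul (n : ℕ) (q : ℚ) (x : R) :
    n • (algebraMap ℚ R q * x) = algebraMap ℚ R (n * q) * x := by
  rw [← Nat.cast_smul_eq_nsmul ℚ, Algebra.smul_def, ← mul_assoc, ← map_mul]

variable (F Z : (σ →₀ ℕ) → R)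

open scoped Classical in
lemma recA
    (hZT : ∀ μ, Z μ = ∑ Λ ∈ TT μ, algebraMap ℚ R (1 / lmovAut Λ) * (Λ.map F).prod)
    (μ : σ →₀ ℕ) :
    (Dg μ) • Z μ = ∑ ν ∈ Finset.Iic μ, (Dg ν) • (F ν * Z (μ - ν)) := by
  classical
  have hdrop : ∑ ν ∈ Finset.Iic μ, (Dg ν) • (F ν * Z (μ - ν))
      = ∑ ν ∈ (Finset.Iic μ).erase 0, (Dg ν) • (F ν * Z (μ - ν)) :=
    (Finset.sum_erase _ (by simp [Dg_zero])).symm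
  rw [hdrop]
  have hexp : ∀ ν ∈ (Finset.Iic μ).erase 0, (Dg ν) • (F ν * Z (μ - ν))
      = ∑ Λ' ∈ TT (μ - ν),
          (Dg ν) • (F ν * (algebraMap ℚ R (1 / lmovAut Λ') * (Λ'.map F).prod)) := by
    intro ν _
    rw [hZT (μ - ν), Finset.mul_sum, Finset.smul_sum]
  rw [Finset.sum_congr rfl hexp, Finset.sum_sigma']
  -- reindex
  have key :
      ∑ p ∈ ((Finset.Iic μ).erase 0).sigma (fun ν => TT (μ - ν)),
        (Dg p.1) • (F p.1 * (algebraMap ℚ R (1 / lmovAut p.2) * (p.2.map F).prod))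
      = ∑ p ∈ (TT μ).sigma (fun Λ => Λ.toFinset),
        (Dg p.2) • (F p.2 *
          (algebraMap ℚ R (1 / lmovAut (p.1.erase p.2)) * ((p.1.erase p.2).map F).prod)) := by
    refine Finset.sum_nbij' (fun p => ⟨p.1 ::ₘ p.2, p.1⟩) (fun p => ⟨p.2, p.1.erase p.2⟩)
      ?_ ?_ ?_ ?_ ?_
    · rintro ⟨ν, Λ'⟩ hp
      simp only [Finset.mem_sigma, Finset.mem_erase, Finset.mem_Iic] at hp
      obtain ⟨⟨hν0, hνμ⟩, hΛ'⟩ := hp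
      rw [mem_TT] at hΛ'
      simp only [Finset.mem_sigma, mem_TT]
      refine ⟨⟨?_, ?_⟩, ?_⟩
      · rw [Multiset.sum_cons, hΛ'.1, add_tsub_cancel_of_le hνμ]
      · intro h
        rcases Multiset.mem_cons.1 h with h | h
        · exact hν0 h.symm
        · exact hΛ'.2 h
      · exact Multiset.mem_toFinset.2 (Multiset.mem_cons_self _ _)
    · rintro ⟨Λ, ν⟩ hp
      simp only [Finset.mem_sigma, mem_TT] at hp
      obtain ⟨⟨hsum, h0⟩, hν⟩ := hp
      have hνΛ : ν ∈ Λ := Multiset.mem_toFinset.1 hν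
      have hν0 : ν ≠ 0 := fun h => h0 (h ▸ hνΛ)
      have hνμ : ν ≤ μ := hsum ▸ Multiset.le_sum_of_mem hνΛ
      simp only [Finset.mem_sigma, Finset.mem_erase, Finset.mem_Iic, mem_TT]
      refine ⟨⟨hν0, hνμ⟩, ?_, fun h => h0 (Multiset.mem_of_mem_erase h)⟩
      have hcons : ν + (Λ.erase ν).sum = μ := by
        rw [← Multiset.sum_cons, Multiset.cons_erase hνΛ, hsum]
      have := add_tsub_cancel_of_le hνμ
      exact add_left_cancel (by rw [hcons, this])
    · rintro ⟨ν, Λ'⟩ _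
      simp [Multiset.erase_cons_head]
    · rintro ⟨Λ, ν⟩ hp
      simp only [Finset.mem_sigma, mem_TT] at hp
      have hνΛ : ν ∈ Λ := Multiset.mem_toFinset.1 hp.2
      simp [Multiset.cons_erase hνΛ]
    · rintro ⟨ν, Λ'⟩ _
      simp [Multiset.erase_cons_head]
  rw [key, Finset.sum_sigma]
  have hinner : ∀ Λ ∈ TT μ,
      (∑ ν ∈ Λ.toFinset, (Dg ν) • (F ν *
        (algebraMap ℚ R (1 / lmovAut (Λ.erase ν)) * ((Λ.erase ν).map F).prod)))
      = (Dg μ) • (algebraMap ℚ R (1 / lmovAut Λ) * (Λ.map F).prod) := by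
    intro Λ hΛ
    rw [mem_TT] at hΛ
    obtain ⟨hsum, h0⟩ := hΛ
    have hstep : ∀ ν ∈ Λ.toFinset, (Dg ν) • (F ν *
        (algebraMap ℚ R (1 / lmovAut (Λ.erase ν)) * ((Λ.erase ν).map F).prod))
        = algebraMap ℚ R ((Dg ν * Λ.count ν : ℕ) / lmovAut Λ) * (Λ.map F).prod := by
      intro ν hν
      have hνΛ : ν ∈ Λ := Multiset.mem_toFinset.1 hν
      rw [mul_left_comm, Multiset.prod_map_erase (f := F) hνΛ, one_div_lmovAut_erase hνΛ,
        nsmul_algebraMap_mul]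
      have hq : ((Dg ν : ℚ)) * ((Λ.count ν : ℚ) / lmovAut Λ)
          = ((Dg ν * Λ.count ν : ℕ) : ℚ) / lmovAut Λ := by push_cast; ring
      rw [hq]
    rw [Finset.sum_congr rfl hstep, ← Finset.sum_mul, ← map_sum, nsmul_algebraMap_mul]
    congr 2
    rw [← Finset.sum_div, ← Nat.cast_sum]
    have : ∑ ν ∈ Λ.toFinset, Dg ν * Λ.count ν = Dg μ := by
      rw [← hsum, ← sum_count_mul_Dg Λ]
      exact Finset.sum_congr rfl fun x _ => mul_comm _ _
    rw [this, mul_one_div]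
  rw [Finset.sum_congr rfl hinner, hZT μ, Finset.smul_sum]

/-- candidate free energy defined from Z by the θ-sum -/
noncomputable def Fth (Z : (σ →₀ ℕ) → R) (μ : σ →₀ ℕ) : R :=
  ∑ Λ ∈ TT μ, algebraMap ℚ R (lmovTheta Λ) * (Λ.map Z).prod

open scoped Classical in
lemma recB (hZ0 : Z 0 = 1) (μ : σ →₀ ℕ) (hμ : μ ≠ 0) :
    (Dg μ) • Z μ = ∑ ν ∈ Finset.Iic μ, (Dg ν) • (Fth Z ν * Z (μ - ν)) := by
  classical
  have hdrop : ∑ ν ∈ Finset.Iic μ, (Dg ν) • (Fth Z ν * Z (μ - ν))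
      = ∑ ν ∈ (Finset.Iic μ).erase 0, (Dg ν) • (Fth Z ν * Z (μ - ν)) :=
    (Finset.sum_erase _ (by simp [Dg_zero])).symm
  have hμmem : μ ∈ (Finset.Iic μ).erase 0 :=
    Finset.mem_erase.2 ⟨hμ, Finset.mem_Iic.2 le_rfl⟩
  rw [hdrop, ← Finset.add_sum_erase _ _ hμmem, tsub_self, hZ0, mul_one]
  -- expand the μ-term
  have hA : (Dg μ) • Fth Z μ
      = ∑ M ∈ TT μ, (Dg μ) • (algebraMap ℚ R (lmovTheta M) * (M.map Z).prod) := by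
    rw [Fth, Finset.smul_sum]
  -- expand the rest and reindex
  have hexp : ∀ ν ∈ ((Finset.Iic μ).erase 0).erase μ,
      (Dg ν) • (Fth Z ν * Z (μ - ν))
      = ∑ Λ ∈ TT ν, (Dg ν) • (algebraMap ℚ R (lmovTheta Λ) * (Λ.map Z).prod * Z (μ - ν)) := by
    intro ν _
    rw [Fth, Finset.sum_mul, Finset.smul_sum]
  rw [Finset.sum_congr rfl hexp, Finset.sum_sigma']
  have key :
      ∑ p ∈ (((Finset.Iic μ).erase 0).erase μ).sigma (fun ν => TT ν),
        (Dg p.1) • (algebraMap ℚ R (lmovTheta p.2) * (p.2.map Z).prod * Z (μ - p.1))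
      = ∑ p ∈ ((TT μ).sigma (fun M => M.toFinset)).filter (fun p => p.1.erase p.2 ≠ 0),
        (Dg ((p.1.erase p.2).sum)) • (algebraMap ℚ R (lmovTheta (p.1.erase p.2))
          * ((p.1.erase p.2).map Z).prod * Z p.2) := by
    refine Finset.sum_nbij' (fun p => ⟨(μ - p.1) ::ₘ p.2, μ - p.1⟩)
      (fun p => ⟨(p.1.erase p.2).sum, p.1.erase p.2⟩) ?_ ?_ ?_ ?_ ?_
    · rintro ⟨ν, Λ⟩ hp
      simp only [Finset.mem_sigma, Finset.mem_erase, Finset.mem_Iic, mem_TT] at hp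
      obtain ⟨⟨hνμ', hν0, hνμ⟩, hΛs, hΛ0⟩ := hp
      have hρ0 : μ - ν ≠ 0 := fun h => hνμ' (le_antisymm hνμ (tsub_eq_zero_iff_le.1 h))
      simp only [Finset.mem_filter, Finset.mem_sigma, mem_TT]
      refine ⟨⟨⟨?_, ?_⟩, ?_⟩, ?_⟩
      · rw [Multiset.sum_cons, hΛs, tsub_add_cancel_of_le hνμ]
      · intro h
        rcases Multiset.mem_cons.1 h with h | h
        · exact hρ0 h.symm
        · exact hΛ0 h
      · exact Multiset.mem_toFinset.2 (Multiset.mem_cons_self _ _)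
      · rw [Multiset.erase_cons_head]
        intro h
        exact hν0 (by rw [← hΛs, h, Multiset.sum_zero])
    · rintro ⟨M, ρ⟩ hp
      simp only [Finset.mem_filter, Finset.mem_sigma, mem_TT] at hp
      obtain ⟨⟨⟨hMs, hM0⟩, hρ⟩, hE⟩ := hp
      have hρM : ρ ∈ M := Multiset.mem_toFinset.1 hρ
      have hρ0 : ρ ≠ 0 := fun h => hM0 (h ▸ hρM)
      have hsplit : ρ + (M.erase ρ).sum = μ := by
        rw [← Multiset.sum_cons, Multiset.cons_erase hρM, hMs]
      have hν0 : (M.erase ρ).sum ≠ 0 := by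
        intro h
        obtain ⟨x, hx⟩ := Multiset.exists_mem_of_ne_zero hE
        exact hM0 ((Multiset.sum_eq_zero_iff.1 h x hx) ▸ Multiset.mem_of_mem_erase hx)
      simp only [Finset.mem_sigma, Finset.mem_erase, Finset.mem_Iic, mem_TT]
      refine ⟨⟨?_, hν0, ?_⟩, trivial, fun h => hM0 (Multiset.mem_of_mem_erase h)⟩
      · intro h
        rw [h] at hsplit
        exact hρ0 (by simpa using hsplit)
      · exact le_add_self.trans hsplit.le
    · rintro ⟨ν, Λ⟩ hp
      simp only [Finset.mem_sigma, Finset.mem_erase, Finset.mem_Iic, mem_TT] at hp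
      simp [Multiset.erase_cons_head, hp.2.1]
    · rintro ⟨M, ρ⟩ hp
      simp only [Finset.mem_filter, Finset.mem_sigma, mem_TT] at hp
      obtain ⟨⟨⟨hMs, hM0⟩, hρ⟩, hE⟩ := hp
      have hρM : ρ ∈ M := Multiset.mem_toFinset.1 hρ
      have hsplit : ρ + (M.erase ρ).sum = μ := by
        rw [← Multiset.sum_cons, Multiset.cons_erase hρM, hMs]
      have hρeq : ρ = μ - (M.erase ρ).sum := eq_tsub_of_add_eq hsplit
      simp only [← hρeq, Multiset.cons_erase hρM]
    · rintro ⟨ν, Λ⟩ hp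
      simp only [Finset.mem_sigma, Finset.mem_erase, Finset.mem_Iic, mem_TT] at hp
      simp [Multiset.erase_cons_head, hp.2.1]
  rw [key]
  rw [Finset.sum_filter_of_ne (by
    rintro ⟨M, ρ⟩ _ hne h0
    rw [h0] at hne
    simp [Dg_zero] at hne)]
  rw [Finset.sum_sigma, hA, ← Finset.sum_add_distrib]
  have hper : ∀ M ∈ TT μ,
      ((Dg μ) • (algebraMap ℚ R (lmovTheta M) * (M.map Z).prod)
        + ∑ ρ ∈ M.toFinset, (Dg ((M.erase ρ).sum)) •
            (algebraMap ℚ R (lmovTheta (M.erase ρ)) * ((M.erase ρ).map Z).prod * Z ρ))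
      = if M = ({μ} : Multiset (σ →₀ ℕ)) then (Dg μ) • Z μ else 0 := by
    intro M hM
    rw [mem_TT] at hM
    obtain ⟨hMs, hM0⟩ := hM
    have hMne : M ≠ 0 := by
      intro h; exact hμ (by rw [← hMs, h, Multiset.sum_zero])
    have hstep : ∀ ρ ∈ M.toFinset, (Dg ((M.erase ρ).sum)) •
          (algebraMap ℚ R (lmovTheta (M.erase ρ)) * ((M.erase ρ).map Z).prod * Z ρ)
        = algebraMap ℚ R ((Dg ((M.erase ρ).sum) : ℚ) * lmovTheta (M.erase ρ))
            * (M.map Z).prod := by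
      intro ρ hρ
      have hρM : ρ ∈ M := Multiset.mem_toFinset.1 hρ
      rw [mul_assoc, mul_comm (((M.erase ρ).map Z).prod) (Z ρ),
        Multiset.prod_map_erase (f := Z) hρM, nsmul_algebraMap_mul]
    rw [Finset.sum_congr rfl hstep, ← Finset.sum_mul, ← map_sum]
    have hsmul : (Dg μ) • (algebraMap ℚ R (lmovTheta M) * (M.map Z).prod)
        = algebraMap ℚ R ((Dg μ : ℚ) * lmovTheta M) * (M.map Z).prod := by
      rw [nsmul_algebraMap_mul]
    rw [hsmul, ← add_mul, ← _root_.map_add]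
    have hθ := theta_rel (M := M) hMne
    rw [hMs] at hθ
    rw [hθ]
    by_cases h1 : Multiset.card M = 1
    · obtain ⟨a, ha⟩ := Multiset.card_eq_one.1 h1
      have haμ : a = μ := by rw [ha] at hMs; simpa using hMs
      have hMeq : M = ({μ} : Multiset (σ →₀ ℕ)) := by rw [ha, haμ]
      rw [if_pos h1, if_pos hMeq, hMeq]
      rw [Multiset.map_singleton, Multiset.prod_singleton,
        ← Nat.cast_smul_eq_nsmul ℚ, Algebra.smul_def]
    · have hMne2 : M ≠ ({μ} : Multiset (σ →₀ ℕ)) := by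
        intro h; exact h1 (by rw [h]; simp)
      rw [if_neg h1, if_neg hMne2]
      simp
  rw [Finset.sum_congr rfl hper, Finset.sum_ite_eq' (TT μ), if_pos (TT_self hμ)]

lemma Dg_lt {ν μ : σ →₀ ℕ} (hle : ν ≤ μ) (hne : ν ≠ μ) : Dg ν < Dg μ := by
  have h : ν + (μ - ν) = μ := add_tsub_cancel_of_le hle
  have hsub : μ - ν ≠ 0 := by
    intro h0; rw [h0, add_zero] at h; exact hne h
  have h3 : Dg (μ - ν) ≠ 0 := fun hh => hsub (Dg_eq_zero.1 hh)
  have h2 : Dg ν + Dg (μ - ν) = Dg μ := by rw [← Dg_add, h]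
  omega

lemma F_eq (F Z : (σ →₀ ℕ) → R)
    (hZT : ∀ μ, Z μ = ∑ Λ ∈ TT μ, algebraMap ℚ R (1 / lmovAut Λ) * (Λ.map F).prod) :
    ∀ μ : σ →₀ ℕ, μ ≠ 0 → F μ = Fth Z μ := by
  classical
  have hZ0 : Z 0 = 1 := by
    rw [hZT 0, TT_zero]
    simp [lmovAut_zero]
  suffices h : ∀ n (μ : σ →₀ ℕ), μ ≠ 0 → Dg μ ≤ n → F μ = Fth Z μ by
    intro μ hμ; exact h (Dg μ) μ hμ le_rfl
  intro n
  induction n with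
  | zero => intro μ hμ h; exact absurd (Dg_eq_zero.1 (Nat.le_zero.1 h)) hμ
  | succ n ih =>
    intro μ hμ hn
    have hB := recB Z hZ0 μ hμ
    rw [recA F Z hZT μ] at hB
    have hμIic : μ ∈ Finset.Iic μ := Finset.mem_Iic.2 le_rfl
    rw [← Finset.add_sum_erase _ _ hμIic,
      ← Finset.add_sum_erase _ (fun ν => (Dg ν) • (Fth Z ν * Z (μ - ν))) hμIic] at hB
    have hrest : ∑ ν ∈ (Finset.Iic μ).erase μ, (Dg ν) • (F ν * Z (μ - ν))
        = ∑ ν ∈ (Finset.Iic μ).erase μ, (Dg ν) • (Fth Z ν * Z (μ - ν)) := by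
      refine Finset.sum_congr rfl fun ν hν => ?_
      obtain ⟨hνμ, hνle⟩ := Finset.mem_erase.1 hν
      by_cases hν0 : ν = 0
      · simp [hν0, Dg_zero]
      · rw [ih ν hν0 (by have := Dg_lt (Finset.mem_Iic.1 hνle) hνμ; omega)]
    rw [hrest] at hB
    have hcancel := add_right_cancel hB
    rw [tsub_self, hZ0, mul_one, mul_one] at hcancel
    have hq : ((Dg μ : ℚ)) ≠ 0 := Nat.cast_ne_zero.2 fun h => hμ (Dg_eq_zero.1 h)
    have h1 : ((Dg μ : ℚ)) • F μ = ((Dg μ : ℚ)) • Fth Z μ := by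
      rw [Nat.cast_smul_eq_nsmul, Nat.cast_smul_eq_nsmul]; exact hcancel
    calc F μ = ((Dg μ:ℚ))⁻¹ • (((Dg μ:ℚ)) • F μ) := (inv_smul_smul₀ hq _).symm
    _ = ((Dg μ:ℚ))⁻¹ • (((Dg μ:ℚ)) • Fth Z μ) := by rw [h1]
    _ = Fth Z μ := inv_smul_smul₀ hq _

end Main
end LMOVAux

/-- Exponential/logarithm inversion between the partition function and the free
energy: if `Z(μ) = ∑_{Λ ⊢ μ} (∏_{ν ∈ Λ} F ν)/|Aut Λ|` (sum over all finite multisets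
of nonzero elements of `σ →₀ ℕ` with sum `μ`) and `F 0 = 0`, then for every `μ ≠ 0`
one has `F(μ) = ∑_{Λ ⊢ μ} θ(Λ) ∏_{ν ∈ Λ} Z(ν)`. -/
theorem stmt_5 {R : Type*} [CommRing R] [Algebra ℚ R] {σ : Type*}
    (F Z : (σ →₀ ℕ) → R) (hF : F 0 = 0)
    (hZ : ∀ μ : σ →₀ ℕ,
      Z μ = ∑ᶠ Λ ∈ {Λ : Multiset (σ →₀ ℕ) | Λ.sum = μ ∧ (0 : σ →₀ ℕ) ∉ Λ},
        algebraMap ℚ R (1 / lmovAut Λ) * (Λ.map F).prod) :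
    ∀ μ : σ →₀ ℕ, μ ≠ 0 →
      F μ = ∑ᶠ Λ ∈ {Λ : Multiset (σ →₀ ℕ) | Λ.sum = μ ∧ (0 : σ →₀ ℕ) ∉ Λ},
        algebraMap ℚ R (lmovTheta Λ) * (Λ.map Z).prod := by
  intro μ hμ
  have hZT : ∀ ν, Z ν = ∑ Λ ∈ LMOVAux.TT ν,
      algebraMap ℚ R (1 / lmovAut Λ) * (Λ.map F).prod := by
    intro ν
    rw [hZ ν, LMOVAux.finsum_eq_TT]
  rw [LMOVAux.F_eq F Z hZT μ hμ, LMOVAux.Fth, LMOVAux.finsum_eq_TT]
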